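/- Suppose y_t^{(0)} satisfies y_t^{(0)} = β exp(θ x_{t+1}^{(0)}) (1 + y_{t+1}^{(0)}) for all t ≥ 0, where x_t^{(0)} = x̄ + ρᵗ(x₀ - x̄) with |ρ| < 1, 0 < β, and β exp(θ x̄) < 1, and suppose y_t^{(0)} is bounded. Then y_t^{(0)} = ∑_{i=1}^{∞} βⁱ exp(θ [x̄ i + (ρ(1-ρⁱ)/(1-ρ))(x_t^{(0)} - x̄)]). -/

import Mathlib

open Finset Filter

/-- A bounded sequence `y_t` satisfying `y_t = β exp(θ x_{t+1})(1 + y_{t+1})`,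
with `x_t = x̄ + ρᵗ(x₀ - x̄)`, `|ρ| < 1`, `β > 0`, `β exp(θ x̄) < 1`,
is given by the series `y_t = ∑_{i≥1} βⁱ exp(θ[x̄ i + ρ(1-ρⁱ)/(1-ρ)·(x_t - x̄)])`. -/
theorem stmt9 (β θ xbar x0 ρ : ℝ) (hβ : 0 < β) (hρ : |ρ| < 1)
    (hstab : β * Real.exp (θ * xbar) < 1)
    (x : ℕ → ℝ) (hx : ∀ t, x t = xbar + ρ ^ t * (x0 - xbar))
    (y : ℕ → ℝ) (hbdd : ∃ M, ∀ t, |y t| ≤ M)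
    (hrec : ∀ t, y t = β * Real.exp (θ * x (t + 1)) * (1 + y (t + 1))) :
    ∀ t, y t = ∑' i : ℕ,
      β ^ (i + 1) * Real.exp (θ * (xbar * (i + 1) +
        ρ * (1 - ρ ^ (i + 1)) / (1 - ρ) * (x t - xbar))) := by
  intro t
  obtain ⟨M, hM⟩ := hbdd
  set g : ℕ → ℝ := fun j => β * Real.exp (θ * x (t + 1 + j)) with hg
  set f : ℕ → ℝ := fun i => β ^ (i + 1) * Real.exp (θ * (xbar * (i + 1) +
      ρ * (1 - ρ ^ (i + 1)) / (1 - ρ) * (x t - xbar))) with hf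
  have hρ1 : ρ ≠ 1 := by
    intro h; rw [h] at hρ; simp at hρ
  have h1ρ : (1 : ℝ) - ρ ≠ 0 := by
    intro h; exact hρ1 (by linarith)
  have hgpos : ∀ j, 0 < g j := fun j => mul_pos hβ (Real.exp_pos _)
  -- summand equals product of factors
  have hρ1' : ρ - 1 ≠ 0 := sub_ne_zero.mpr hρ1
  have hfg : ∀ i, f i = ∏ j ∈ range (i + 1), g j := by
    intro i
    have hprod : ∏ j ∈ range (i + 1), g j
        = β ^ (i + 1) * Real.exp (∑ j ∈ range (i + 1), θ * x (t + 1 + j)) := by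
      rw [Real.exp_sum, hg]
      simp [Finset.prod_mul_distrib]
    have hgeom : ∑ j ∈ range (i + 1), ρ ^ j = (ρ ^ (i + 1) - 1) / (ρ - 1) :=
      geom_sum_eq hρ1 _
    have hterm : ∀ j, θ * x (t + 1 + j)
        = θ * xbar + (θ * (x0 - xbar) * ρ ^ (t + 1)) * ρ ^ j := by
      intro j; rw [hx (t + 1 + j), pow_add]; ring
    have hsum : ∑ j ∈ range (i + 1), θ * x (t + 1 + j)
        = (i + 1 : ℝ) * (θ * xbar) + (θ * (x0 - xbar) * ρ ^ (t + 1)) *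
            ((ρ ^ (i + 1) - 1) / (ρ - 1)) := by
      rw [Finset.sum_congr rfl (fun j _ => hterm j), Finset.sum_add_distrib,
        Finset.sum_const, ← Finset.mul_sum, hgeom, Finset.card_range]
      ring
    have e : (ρ ^ (i + 1) - 1) / (ρ - 1) = (1 - ρ ^ (i + 1)) / (1 - ρ) := by
      rw [div_eq_div_iff hρ1' h1ρ]; ring
    rw [hprod, hf, hsum, hx t, e]
    beta_reduce
    congr 2
    ring
  -- unrolled recursion
  have key : ∀ n, y t = (∑ i ∈ range n, f i) + (∏ j ∈ range n, g j) * y (t + n) := by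
    intro n
    induction n with
    | zero => simp
    | succ n ih =>
      rw [Finset.sum_range_succ, Finset.prod_range_succ, hfg,
        Finset.prod_range_succ]
      have hy' : y (t + n) = g n * (1 + y (t + (n + 1))) := by
        have h := hrec (t + n)
        rw [show t + n + 1 = t + 1 + n from by omega] at h
        rw [show t + (n + 1) = t + 1 + n from by omega]
        simpa [hg] using h
      rw [ih, hy']
      ring
  -- limits of the factors
  have hxlim : Tendsto (fun j : ℕ => x (t + 1 + j)) atTop (nhds xbar) := by
    have hpow : Tendsto (fun j : ℕ => ρ ^ (t + 1 + j)) atTop (nhds 0) := by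
      have := tendsto_pow_atTop_nhds_zero_of_abs_lt_one hρ
      have := this.comp (tendsto_add_atTop_nat (t + 1))
      simpa [Function.comp_def, add_comm] using this
    have : Tendsto (fun j : ℕ => xbar + ρ ^ (t + 1 + j) * (x0 - xbar)) atTop
        (nhds (xbar + 0 * (x0 - xbar))) :=
      tendsto_const_nhds.add (hpow.mul tendsto_const_nhds)
    simpa [hx] using this
  have hglim : Tendsto g atTop (nhds (β * Real.exp (θ * xbar))) := by
    have : Tendsto (fun j : ℕ => β * Real.exp (θ * x (t + 1 + j))) atTop
        (nhds (β * Real.exp (θ * xbar))) :=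
      tendsto_const_nhds.mul ((Real.continuous_exp.tendsto _).comp
        (tendsto_const_nhds.mul hxlim))
    simpa [hg] using this
  set r : ℝ := (β * Real.exp (θ * xbar) + 1) / 2 with hr
  have hqr : β * Real.exp (θ * xbar) < r := by
    rw [hr]; linarith
  have hr1 : r < 1 := by rw [hr]; linarith
  have hgle : ∀ᶠ j in atTop, g j ≤ r :=
    (hglim.eventually_lt_const hqr).mono fun j hj => hj.le
  have hfpos : ∀ i, 0 < f i := fun i => by
    rw [hfg]
    exact Finset.prod_pos fun j _ => hgpos j
  -- summability via ratio test
  have hsummable : Summable f := by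
    apply summable_of_ratio_norm_eventually_le hr1
    filter_upwards [(tendsto_add_atTop_nat 1).eventually hgle] with n hgn
    have h1 : f (n + 1) = f n * g (n + 1) := by
      rw [hfg, hfg, Finset.prod_range_succ]
    rw [Real.norm_eq_abs, Real.norm_eq_abs, abs_of_pos (hfpos _),
      abs_of_pos (hfpos _), h1]
    calc f n * g (n + 1) ≤ f n * r := by
          exact mul_le_mul_of_nonneg_left hgn (hfpos n).le
      _ = r * f n := by ring
  -- the remainder product tends to zero
  have hQlim : Tendsto (fun n => ∏ j ∈ range n, g j) atTop (nhds 0) := by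
    rw [← tendsto_add_atTop_iff_nat 1]
    have := hsummable.tendsto_atTop_zero
    refine this.congr fun n => ?_
    rw [hfg]
  have hQpos : ∀ n, 0 < ∏ j ∈ range n, g j := fun n =>
    Finset.prod_pos fun j _ => hgpos j
  have hrem : Tendsto (fun n => (∏ j ∈ range n, g j) * y (t + n)) atTop (nhds 0) := by
    refine squeeze_zero_norm (a := fun n => (∏ j ∈ range n, g j) * M) (fun n => ?_) ?_
    · 
      rw [Real.norm_eq_abs, abs_mul, abs_of_pos (hQpos n)]
      exact mul_le_mul_of_nonneg_left (hM _) (hQpos n).le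
    · have := hQlim.mul_const M
      simpa using this
  -- conclude
  have hS1 : Tendsto (fun n => ∑ i ∈ range n, f i) atTop (nhds (∑' i, f i)) :=
    hsummable.hasSum.tendsto_sum_nat
  have hS2 : Tendsto (fun n => ∑ i ∈ range n, f i) atTop (nhds (y t)) := by
    have : (fun n => ∑ i ∈ range n, f i)
        = fun n => y t - (∏ j ∈ range n, g j) * y (t + n) := by
      funext n
      rw [key n]; ring
    rw [this]
    simpa using tendsto_const_nhds.sub hrem
  exact tendsto_nhds_unique hS2 hS1
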